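/- Let M, a, s be positive integers with M > 1 such that ∑_{i=0}^{M-1} (a+i)^2 = s^2, and suppose M = 24·m₁ + 9 for a nonnegative integer m₁. Then for every prime p > 3 with p ≡ 3 (mod 4), there do not exist integers i ≥ 0 and q ≥ 1 with p ∤ q such that 24·m₁ + 10 = p^(2i+1)·q; equivalently, the exact power of p dividing M + 1 is even. -/

import Mathlib

lemma sumsq_identity (a n : ℕ) :
    12 * ∑ i ∈ Finset.range (n+1), (a + i) ^ 2
      = 3 * (n+1) * (2*a+n)^2 + n * (n+1) * (n+2) := by
  induction n with
  | zero => simp; ring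
  | succ n ih =>
    rw [Finset.sum_range_succ, Nat.mul_add, ih]
    ring

lemma key_dvd (p : ℕ) (hp : p.Prime) (hp3 : 3 < p) (hp4 : p % 4 = 3)
    (m : ℤ) (hm : (p:ℤ) ∣ m + 1) (s b : ℤ)
    (h : (p:ℤ) ∣ 12 * s^2 - 3 * m * b^2) : (p:ℤ) ∣ s ∧ (p:ℤ) ∣ b := by
  haveI : Fact p.Prime := ⟨hp⟩
  have hmz : ((m : ZMod p)) = -1 := by
    have h1 : ((m + 1 : ℤ) : ZMod p) = 0 := by
      rwa [ZMod.intCast_zmod_eq_zero_iff_dvd]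
    push_cast at h1
    exact eq_neg_of_add_eq_zero_left h1
  have h2 : (3 : ZMod p) ≠ 0 := by
    intro h3
    have : ((3 : ℕ) : ZMod p) = 0 := by push_cast; exact h3
    rw [ZMod.natCast_eq_zero_iff] at this
    have := Nat.le_of_dvd (by norm_num) this
    omega
  have h2' : (2 : ZMod p) ≠ 0 := by
    intro h3
    have : ((2 : ℕ) : ZMod p) = 0 := by push_cast; exact h3
    rw [ZMod.natCast_eq_zero_iff] at this
    have := Nat.le_of_dvd (by norm_num) this
    omega
  have h0 : ((12 * s^2 - 3 * m * b^2 : ℤ) : ZMod p) = 0 := by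
    rwa [ZMod.intCast_zmod_eq_zero_iff_dvd]
  push_cast at h0
  rw [hmz] at h0
  -- h0 : 12 * S^2 - 3 * (-1) * B^2 = 0
  set S := ((s : ZMod p)) with hS
  set B := ((b : ZMod p)) with hB
  have hkey : (2*S)^2 = - B^2 := by
    have h4 : (3 : ZMod p) * ((2*S)^2 + B^2) = 0 := by
      rw [← h0]; ring
    have := (mul_eq_zero.mp h4).resolve_left h2
    linear_combination this
  have hBzero : B = 0 := by
    by_contra hBne
    have hsq : IsSquare (-1 : ZMod p) := by
      refine ⟨(2*S) * B⁻¹, ?_⟩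
      have : ((2*S) * B⁻¹) * ((2*S) * B⁻¹) = (2*S)^2 * (B⁻¹)^2 := by ring
      rw [this, hkey]
      field_simp
    rw [ZMod.exists_sq_eq_neg_one_iff] at hsq
    exact hsq hp4
  have hSzero : S = 0 := by
    have : (2*S)^2 = 0 := by rw [hkey, hBzero]; ring
    have h5 : (2 : ZMod p) * S = 0 := by
      exact pow_eq_zero_iff (n := 2) (by norm_num) |>.mp this
    exact (mul_eq_zero.mp h5).resolve_left h2'
  constructor
  · rwa [← ZMod.intCast_zmod_eq_zero_iff_dvd]
  · rwa [← ZMod.intCast_zmod_eq_zero_iff_dvd]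

lemma descent (p : ℕ) (hp : p.Prime) (hp3 : 3 < p) (hp4 : p % 4 = 3)
    (m : ℤ) (hm : (p:ℤ) ∣ m + 1) :
    ∀ j : ℕ, ∀ s b c : ℤ, ¬ (p:ℤ) ∣ c →
      12 * s^2 = 3 * m * b^2 + (p:ℤ)^(2*j+1) * c → False := by
  have hpz : (p:ℤ) ≠ 0 := by
    exact_mod_cast hp.ne_zero
  intro j
  induction j with
  | zero =>
    intro s b c hc heq
    obtain ⟨hds, hdb⟩ := key_dvd p hp hp3 hp4 m hm s b
      ⟨c, by linear_combination heq⟩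
    obtain ⟨s₁, rfl⟩ := hds
    obtain ⟨b₁, rfl⟩ := hdb
    apply hc
    refine ⟨12 * s₁^2 - 3 * m * b₁^2, ?_⟩
    have h6 : (p:ℤ) * c = (p:ℤ) * ((p:ℤ) * (12 * s₁^2 - 3 * m * b₁^2)) := by
      linear_combination -heq
    exact mul_left_cancel₀ hpz h6
  | succ j ih =>
    intro s b c hc heq
    obtain ⟨hds, hdb⟩ := key_dvd p hp hp3 hp4 m hm s b
      ⟨(p:ℤ)^(2*j+2) * c, by push_cast; linear_combination heq⟩
    obtain ⟨s₁, rfl⟩ := hds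
    obtain ⟨b₁, rfl⟩ := hdb
    apply ih s₁ b₁ c hc
    have h6 : (p:ℤ)^2 * (12 * s₁^2) = (p:ℤ)^2 * (3 * m * b₁^2 + (p:ℤ)^(2*j+1) * c) := by
      ring_nf
      ring_nf at heq
      linear_combination heq
    exact mul_left_cancel₀ (pow_ne_zero 2 hpz) h6

theorem stmt (M a s m₁ : ℕ) (hM : 1 < M) (ha : 1 ≤ a) (hs : 1 ≤ s)
    (hsum : ∑ i ∈ Finset.range M, (a + i) ^ 2 = s ^ 2)
    (hMeq : M = 24 * m₁ + 9) :
    ∀ p : ℕ, p.Prime → 3 < p → p % 4 = 3 →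
      ¬ ∃ i q : ℕ, 1 ≤ q ∧ ¬ p ∣ q ∧ 24 * m₁ + 10 = p ^ (2 * i + 1) * q := by
  intro p hp hpgt hp4
  rintro ⟨i, q, hq1, hqnd, heq⟩
  have hid := sumsq_identity a (24 * m₁ + 8)
  have hMn : 24 * m₁ + 8 + 1 = M := by omega
  rw [hMn, hsum] at hid
  have hpdvd : p ∣ 24 * m₁ + 10 := by
    rw [heq]
    exact Dvd.dvd.mul_right (dvd_pow_self p (by omega)) q
  -- p does not divide 24*m₁+8, M, q
  have hc : ¬ p ∣ (24 * m₁ + 8) * M * q := by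
    intro hd
    rcases (Nat.Prime.dvd_mul hp).mp hd with hd | hd
    · rcases (Nat.Prime.dvd_mul hp).mp hd with hd | hd
      · have h2 : p ∣ 2 := by
          have h' := Nat.dvd_sub hpdvd hd
          rwa [show 24*m₁+10-(24*m₁+8) = 2 by omega] at h'
        have := Nat.le_of_dvd (by norm_num) h2
        omega
      · rw [hMeq] at hd
        have h1 : p ∣ 1 := by
          have h' := Nat.dvd_sub hpdvd hd
          rwa [show 24*m₁+10-(24*m₁+9) = 1 by omega] at h'
        have := Nat.le_of_dvd (by norm_num) h1
        omega
    · exact hqnd hd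
  have hm : (p:ℤ) ∣ (M:ℤ) + 1 := by
    have : p ∣ M + 1 := by rw [hMeq]; exact hpdvd
    exact_mod_cast Int.natCast_dvd_natCast.mpr this
  have hz : (12:ℤ) * (s:ℤ)^2
      = 3 * (M:ℤ) * (2*(a:ℤ) + (24*(m₁:ℤ)+8))^2
        + (p:ℤ)^(2*i+1) * ((24*(m₁:ℤ)+8) * (M:ℤ) * (q:ℤ)) := by
    have h1 : (12:ℤ) * (s:ℤ)^2
        = 3 * (M:ℤ) * (2*(a:ℤ) + (24*(m₁:ℤ)+8))^2
          + (24*(m₁:ℤ)+8) * (M:ℤ) * (24*(m₁:ℤ)+10) := by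
      exact_mod_cast hid
    have h2 : (24*(m₁:ℤ)+10) = (p:ℤ)^(2*i+1) * (q:ℤ) := by exact_mod_cast heq
    rw [h1]
    linear_combination ((24*(m₁:ℤ)+8) * (M:ℤ)) * h2
  have hcz : ¬ (p:ℤ) ∣ (24*(m₁:ℤ)+8) * (M:ℤ) * (q:ℤ) := by
    intro hd
    apply hc
    have : ((p:ℕ):ℤ) ∣ (((24*m₁+8) * M * q : ℕ) : ℤ) := by push_cast; convert hd using 2
    exact_mod_cast this
  exact descent p hp hpgt hp4 (M:ℤ) hm i (s:ℤ) (2*(a:ℤ) + (24*(m₁:ℤ)+8))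
    ((24*(m₁:ℤ)+8) * (M:ℤ) * (q:ℤ)) hcz hz
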